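/- Let A, B, C be non-negative real numbers with A ∈ (0,1), and suppose a sequence of non-negative reals {x_k}_{k≥0} satisfies x_{k+1}² ≤ [(1 − A)x_k + C]² + B² for every integer k ≥ 0. Define E = [(1−A)C + {C² + (2A − A²)B²}^{1/2}]/(2A − A²) and D = {[(1−A)E + C]² + B²}^{1/2} − (1−A)E. Then E ≥ (1−A)C/(A(2−A)) + B/√(A(2−A)), D ≤ C + B²A/(C + √(A(2−A))·B), and for all integers k ≥ 0: x_k ≤ (1−A)^k x₀ + D/A ≤ (1−A)^k x₀ + C/A + B²/(C + √(A(2−A))·B). -/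

import Mathlib

set_option maxHeartbeats 1000000


/-- **Lemma (refined recursive inequality).** Let `A, B, C` be non-negative reals with
`A ∈ (0,1)` and suppose a sequence of non-negative reals `x_k` satisfies
`x_{k+1}² ≤ [(1 − A)x_k + C]² + B²` for every `k ≥ 0`.  With
`E = [(1−A)C + {C² + (2A − A²)B²}^{1/2}]/(2A − A²)` and
`D = {[(1−A)E + C]² + B²}^{1/2} − (1−A)E`, one has
`E ≥ (1−A)C/(A(2−A)) + B/√(A(2−A))`, `D ≤ C + B²A/(C + √(A(2−A))·B)`, and
`x_k ≤ (1−A)^k x₀ + D/A ≤ (1−A)^k x₀ + C/A + B²/(C + √(A(2−A))·B)` for all `k ≥ 0`. -/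
theorem recursive_inequality_lemma_refined
    (A B C : ℝ) (hA : 0 < A) (hA1 : A < 1) (hB : 0 ≤ B) (hC : 0 ≤ C)
    (x : ℕ → ℝ) (hx : ∀ k, 0 ≤ x k)
    (hrec : ∀ k : ℕ, (x (k + 1)) ^ 2 ≤ ((1 - A) * x k + C) ^ 2 + B ^ 2)
    (E D : ℝ)
    (hE : E = ((1 - A) * C + Real.sqrt (C ^ 2 + (2 * A - A ^ 2) * B ^ 2)) / (2 * A - A ^ 2))
    (hD : D = Real.sqrt (((1 - A) * E + C) ^ 2 + B ^ 2) - (1 - A) * E) :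
    E ≥ (1 - A) * C / (A * (2 - A)) + B / Real.sqrt (A * (2 - A)) ∧
    D ≤ C + B ^ 2 * A / (C + Real.sqrt (A * (2 - A)) * B) ∧
    ∀ k : ℕ,
      x k ≤ (1 - A) ^ k * x 0 + D / A ∧
      (1 - A) ^ k * x 0 + D / A
        ≤ (1 - A) ^ k * x 0 + C / A + B ^ 2 / (C + Real.sqrt (A * (2 - A)) * B) := by
  have hs : (0:ℝ) < 2 * A - A ^ 2 := by nlinarith
  have hsA : A * (2 - A) = 2 * A - A ^ 2 := by ring
  have h2A : (0:ℝ) < 2 - A := by linarith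
  set t := Real.sqrt (C ^ 2 + (2 * A - A ^ 2) * B ^ 2) with ht
  have ht0 : 0 ≤ t := Real.sqrt_nonneg _
  have ht2 : t ^ 2 = C ^ 2 + (2 * A - A ^ 2) * B ^ 2 := Real.sq_sqrt (by positivity)
  set r := Real.sqrt (A * (2 - A)) with hr
  have hr0 : 0 ≤ r := Real.sqrt_nonneg _
  have hr2 : r ^ 2 = 2 * A - A ^ 2 := by rw [hr, Real.sq_sqrt (by nlinarith)]; ring
  have hrpos : 0 < r := by nlinarith
  -- basic bounds on t
  have htrB : r * B ≤ t := by
    have h1 : Real.sqrt ((2 * A - A ^ 2) * B ^ 2) ≤ t :=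
      Real.sqrt_le_sqrt (by nlinarith)
    have h2 : Real.sqrt ((2 * A - A ^ 2) * B ^ 2) = r * B := by
      rw [← hr2, ← mul_pow, Real.sqrt_sq (by positivity)]
    linarith [h2 ▸ h1]
  have htC : C ≤ t := by
    have h1 : Real.sqrt (C ^ 2) ≤ t := Real.sqrt_le_sqrt (by nlinarith)
    rwa [Real.sqrt_sq hC] at h1
  have hE0 : 0 ≤ E := by
    rw [hE]
    exact div_nonneg (by nlinarith) hs.le
  have hEs : E * (2 * A - A ^ 2) = (1 - A) * C + t := by
    rw [hE]; field_simp
  -- E is the fixed point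
  have h2 : ((1 - A) * E + C) ^ 2 + B ^ 2 = E ^ 2 := by nlinarith [hEs, ht2]
  have hEfix : Real.sqrt (((1 - A) * E + C) ^ 2 + B ^ 2) = E := by
    rw [h2, Real.sqrt_sq hE0]
  have hDE : D = A * E := by rw [hD, hEfix]; ring
  -- part 1
  have part1 : E ≥ (1 - A) * C / (A * (2 - A)) + B / r := by
    have hBr : r * B / (2 * A - A ^ 2) = B / r := by
      rw [← hr2]
      field_simp
    calc (1 - A) * C / (A * (2 - A)) + B / r
        = ((1 - A) * C + r * B) / (2 * A - A ^ 2) := by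
          rw [← hBr, hsA, ← add_div]
      _ ≤ ((1 - A) * C + t) / (2 * A - A ^ 2) := by gcongr
      _ = E := hE.symm
  -- part 2 and its consequence for D/A
  clear_value t r
  have htd : t * (C + r * B) ≤ C * (C + r * B) + (2 * A - A ^ 2) * B ^ 2 := by
    nlinarith [mul_nonneg (sub_nonneg.mpr htC) (sub_nonneg.mpr htrB), ht2]
  have parts : D ≤ C + B ^ 2 * A / (C + r * B) ∧
      D / A ≤ C / A + B ^ 2 / (C + r * B) := by
    rcases eq_or_lt_of_le (by positivity : (0:ℝ) ≤ C + r * B) with hd | hd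
    · have hC0 : C = 0 := by nlinarith
      have hB0 : B = 0 := by nlinarith
      have ht00 : t = 0 := by nlinarith [ht2]
      have hE00 : E = 0 := by
        have h' := hEs
        rw [hC0, ht00] at h'
        rcases mul_eq_zero.mp (by linarith : E * (2 * A - A ^ 2) = 0) with h | h
        · exact h
        · exact absurd h (ne_of_gt hs)
      constructor
      · rw [hDE, hE00, hC0, hB0]; simp
      · rw [hDE, hE00, hC0, hB0]; simp
    · have hEsd : E * (2 * A - A ^ 2) * (C + r * B) = ((1 - A) * C + t) * (C + r * B) := by
        rw [hEs]
      have h4 : A * E * (C + r * B) ≤ C * (C + r * B) + B ^ 2 * A := by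
        nlinarith [hEsd, htd, h2A, hd]
      constructor
      · rw [hDE, ← sub_le_iff_le_add', le_div_iff₀ hd]
        nlinarith [h4]
      · rw [hDE, mul_comm A E, mul_div_assoc, div_self (ne_of_gt hA), mul_one,
          div_add_div _ _ (ne_of_gt hA) (ne_of_gt hd), le_div_iff₀ (by positivity)]
        nlinarith [h4]
  -- the square-root subadditivity step
  have key : ∀ u v : ℝ, 0 ≤ u → 0 ≤ v →
      Real.sqrt ((u + v) ^ 2 + B ^ 2) ≤ u + Real.sqrt (v ^ 2 + B ^ 2) := by
    intro u v hu hv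
    have hsv : 0 ≤ Real.sqrt (v ^ 2 + B ^ 2) := Real.sqrt_nonneg _
    have hsv2 : (Real.sqrt (v ^ 2 + B ^ 2)) ^ 2 = v ^ 2 + B ^ 2 :=
      Real.sq_sqrt (by positivity)
    have hvle : v ≤ Real.sqrt (v ^ 2 + B ^ 2) := by nlinarith
    calc Real.sqrt ((u + v) ^ 2 + B ^ 2)
        ≤ Real.sqrt ((u + Real.sqrt (v ^ 2 + B ^ 2)) ^ 2) :=
          Real.sqrt_le_sqrt (by nlinarith)
      _ = u + Real.sqrt (v ^ 2 + B ^ 2) := Real.sqrt_sq (by positivity)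
  -- the inductive bound
  have hbound : ∀ k : ℕ, x k ≤ (1 - A) ^ k * x 0 + E := by
    intro k
    induction k with
    | zero => simpa using hE0
    | succ k ih =>
      have hpk : (0:ℝ) ≤ (1 - A) ^ k := pow_nonneg (by linarith) k
      have hpk1 : (0:ℝ) ≤ (1 - A) ^ (k + 1) := pow_nonneg (by linarith) (k + 1)
      have h1 : x (k + 1) ≤ Real.sqrt (((1 - A) * x k + C) ^ 2 + B ^ 2) := by
        rw [show x (k + 1) = Real.sqrt ((x (k + 1)) ^ 2) from (Real.sqrt_sq (hx _)).symm]
        exact Real.sqrt_le_sqrt (hrec k)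
      have h2' : Real.sqrt (((1 - A) * x k + C) ^ 2 + B ^ 2)
          ≤ Real.sqrt (((1 - A) ^ (k + 1) * x 0 + ((1 - A) * E + C)) ^ 2 + B ^ 2) := by
        apply Real.sqrt_le_sqrt
        have hstep : (1 - A) * x k + C ≤ (1 - A) ^ (k + 1) * x 0 + ((1 - A) * E + C) := by
          have hm := mul_le_mul_of_nonneg_left ih (by linarith : (0:ℝ) ≤ 1 - A)
          rw [pow_succ]
          nlinarith [hm]
        have hnn : 0 ≤ (1 - A) * x k + C := by
          have := mul_nonneg (by linarith : (0:ℝ) ≤ 1 - A) (hx k)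
          linarith
        have hsq := pow_le_pow_left₀ hnn hstep 2
        linarith [hsq]
      have h3 := key ((1 - A) ^ (k + 1) * x 0) ((1 - A) * E + C)
        (mul_nonneg hpk1 (hx 0))
        (by have := mul_nonneg (by linarith : (0:ℝ) ≤ 1 - A) hE0; linarith)
      rw [hEfix] at h3
      linarith
  have hDAE : D / A = E := by rw [hDE]; field_simp
  exact ⟨part1, parts.1, fun k => ⟨by rw [hDAE]; exact hbound k,
    by have := parts.2; linarith⟩⟩
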